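/- arXiv:2102.00873 — 3 statements merged into one kernel-verified Lean document; each statement's English description precedes it below -/
import Mathlib

section
/- Let U(u) > 0 and define Δ(u) = (1−2aτ)² + (m²U(u)² − a²)(4τ² − κ) and ξ₁(u)² = 4(m²U² − a²)/((1+√Δ)² − 4τ²m²U²). Then with B = 1 + (κ/4)ξ₁², the identity m²B²U² = ξ₁² + (aB − τξ₁²)² holds (equivalently, B·U·m = ±√(ξ₁² + (aB − τξ₁²)²)). -/
/-- with `Δ = (1−2aτ)² + (m²U² − a²)(4τ² − κ)`,
`ξ₁² = 4(m²U² − a²)/((1+√Δ)² − 4τ²m²U²)` and `B = 1 + (κ/4)ξ₁²`, one has the key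
algebraic identity `m²B²U² = ξ₁² + (aB − τξ₁²)²` of Bour's theorem in BCV spaces. -/
theorem bour_key_identity (κ τ a m U : ℝ) (hm : m ≠ 0) (hU : U > 0)
    (hP : m ^ 2 * U ^ 2 - a ^ 2 > 0)
    (hΔ : (1 - 2 * a * τ) ^ 2 + (m ^ 2 * U ^ 2 - a ^ 2) * (4 * τ ^ 2 - κ) ≥ 0)
    (hD : (1 + Real.sqrt ((1 - 2 * a * τ) ^ 2
            + (m ^ 2 * U ^ 2 - a ^ 2) * (4 * τ ^ 2 - κ))) ^ 2
          - 4 * τ ^ 2 * m ^ 2 * U ^ 2 > 0) :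
    let Δ := (1 - 2 * a * τ) ^ 2 + (m ^ 2 * U ^ 2 - a ^ 2) * (4 * τ ^ 2 - κ)
    let ξ₁sq := 4 * (m ^ 2 * U ^ 2 - a ^ 2)
        / ((1 + Real.sqrt Δ) ^ 2 - 4 * τ ^ 2 * m ^ 2 * U ^ 2)
    let B := 1 + κ / 4 * ξ₁sq
    m ^ 2 * B ^ 2 * U ^ 2 = ξ₁sq + (a * B - τ * ξ₁sq) ^ 2 := by
  intro Δ ξ₁sq B
  set s := Real.sqrt Δ with hsdef
  have hs : s ^ 2 = Δ := Real.sq_sqrt hΔ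
  have hDne : (1 + s) ^ 2 - 4 * τ ^ 2 * m ^ 2 * U ^ 2 ≠ 0 := ne_of_gt hD
  have hB : B = (2 + 2 * s - 4 * a * τ) / ((1 + s) ^ 2 - 4 * τ ^ 2 * m ^ 2 * U ^ 2) := by
    show 1 + κ / 4 * ξ₁sq = _
    show 1 + κ / 4 * (4 * (m ^ 2 * U ^ 2 - a ^ 2)
        / ((1 + s) ^ 2 - 4 * τ ^ 2 * m ^ 2 * U ^ 2)) = _
    rw [eq_div_iff hDne]
    linear_combination hs + κ / 4 * (div_mul_cancel₀ (4 * (m ^ 2 * U ^ 2 - a ^ 2)) hDne)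
  rw [hB]
  show m ^ 2 * _ ^ 2 * U ^ 2 = 4 * (m ^ 2 * U ^ 2 - a ^ 2)
      / ((1 + s) ^ 2 - 4 * τ ^ 2 * m ^ 2 * U ^ 2) + (a * _ - τ * (4 * (m ^ 2 * U ^ 2 - a ^ 2)
      / ((1 + s) ^ 2 - 4 * τ ^ 2 * m ^ 2 * U ^ 2))) ^ 2
  field_simp
  ring
end

section
/- Under the relations ξ₁² = 4(m²U² − a²)/((1+√Δ)² − 4τ²m²U²), Δ = (1−2aτ)² + (m²U² − a²)(4τ² − κ), B = 1 + (κ/4)ξ₁², differentiation of m²B²U² = ξ₁² + (aB − τξ₁²)² with respect to u yields m²B²UU' = √Δ · ξ₁ξ₁'. -/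
/-- with `Δ(u) = (1−2aτ)² + (m²U(u)² − a²)(4τ² − κ)`,
`ξ₁(u) = √(4(m²U² − a²)/((1+√Δ)² − 4τ²m²U²))` and `B = 1 + (κ/4)ξ₁²`, differentiating
the identity `m²B²U² = ξ₁² + (aB − τξ₁²)²` gives `m²B²UU' = √Δ · ξ₁ξ₁'`. -/
theorem bour_derivative_identity (κ τ a m : ℝ) (hm : m ≠ 0) (U : ℝ → ℝ)
    (hU : Differentiable ℝ U) (hUpos : ∀ u, U u > 0)
    (hP : ∀ u, m ^ 2 * (U u) ^ 2 - a ^ 2 > 0)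
    (hΔ : ∀ u, (1 - 2 * a * τ) ^ 2
        + (m ^ 2 * (U u) ^ 2 - a ^ 2) * (4 * τ ^ 2 - κ) > 0)
    (hD : ∀ u, (1 + Real.sqrt ((1 - 2 * a * τ) ^ 2
            + (m ^ 2 * (U u) ^ 2 - a ^ 2) * (4 * τ ^ 2 - κ))) ^ 2
          - 4 * τ ^ 2 * m ^ 2 * (U u) ^ 2 > 0) :
    ∀ u : ℝ,
      let Δ : ℝ → ℝ := fun v => (1 - 2 * a * τ) ^ 2
          + (m ^ 2 * (U v) ^ 2 - a ^ 2) * (4 * τ ^ 2 - κ)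
      let ξ₁ : ℝ → ℝ := fun v => Real.sqrt (4 * (m ^ 2 * (U v) ^ 2 - a ^ 2)
          / ((1 + Real.sqrt (Δ v)) ^ 2 - 4 * τ ^ 2 * m ^ 2 * (U v) ^ 2))
      let B : ℝ → ℝ := fun v => 1 + κ / 4 * (ξ₁ v) ^ 2
      m ^ 2 * (B u) ^ 2 * U u * deriv U u
        = Real.sqrt (Δ u) * ξ₁ u * deriv ξ₁ u := by
  intro u Δ ξ₁ B
  -- abbreviations at the point u
  set Uu := U u with hUu
  set U' := deriv U u with hU'
  have hΔu : Δ u > 0 := hΔ u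
  set s := Real.sqrt (Δ u) with hsdef
  have hs : s > 0 := Real.sqrt_pos.mpr hΔu
  have hs2 : s ^ 2 = Δ u := Real.sq_sqrt hΔu.le
  set Du := (1 + s) ^ 2 - 4 * τ ^ 2 * m ^ 2 * Uu ^ 2 with hDudef
  have hDu : Du > 0 := hD u
  have hWu : m ^ 2 * Uu ^ 2 - a ^ 2 > 0 := hP u
  -- derivative of W v = m² U v ² - a²
  have hW : HasDerivAt (fun v => m ^ 2 * (U v) ^ 2 - a ^ 2)
      (2 * m ^ 2 * Uu * U') u := by
    have h1 : HasDerivAt (fun v => (U v) ^ 2) (2 * Uu * U') u := by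
      have := ((hU u).hasDerivAt).fun_pow 2
      simpa [mul_comm, mul_assoc, mul_left_comm] using this
    have := (h1.const_mul (m ^ 2)).sub_const (a ^ 2)
    exact this.congr_deriv (by ring)
  have hΔd : HasDerivAt Δ ((4 * τ ^ 2 - κ) * (2 * m ^ 2 * Uu * U')) u := by
    have := (hW.mul_const (4 * τ ^ 2 - κ)).const_add ((1 - 2 * a * τ) ^ 2)
    exact this.congr_deriv (by ring)
  have hsd : HasDerivAt (fun v => Real.sqrt (Δ v))
      (1 / (2 * s) * ((4 * τ ^ 2 - κ) * (2 * m ^ 2 * Uu * U'))) u := by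
    exact (Real.hasDerivAt_sqrt (ne_of_gt hΔu)).comp u hΔd
  set s' := 1 / (2 * s) * ((4 * τ ^ 2 - κ) * (2 * m ^ 2 * Uu * U')) with hs'def
  set D' := 2 * (1 + s) * s' - 4 * τ ^ 2 * m ^ 2 * (2 * Uu * U') with hD'def
  have hDd : HasDerivAt (fun v => (1 + Real.sqrt (Δ v)) ^ 2
      - 4 * τ ^ 2 * m ^ 2 * (U v) ^ 2) D' u := by
    have h1 : HasDerivAt (fun v => (1 + Real.sqrt (Δ v)) ^ 2)
        (2 * (1 + s) * s') u := by
      have := (hsd.const_add 1).fun_pow 2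
      exact this.congr_deriv (by rw [← hsdef]; norm_num)
    have h2 : HasDerivAt (fun v => 4 * τ ^ 2 * m ^ 2 * (U v) ^ 2)
        (4 * τ ^ 2 * m ^ 2 * (2 * Uu * U')) u := by
      have h3 : HasDerivAt (fun v => (U v) ^ 2) (2 * Uu * U') u := by
        have := ((hU u).hasDerivAt).fun_pow 2
        simpa [mul_comm, mul_assoc, mul_left_comm] using this
      exact h3.const_mul _
    exact h1.sub h2
  set g' := ((4 * (2 * m ^ 2 * Uu * U')) * Du
      - (4 * (m ^ 2 * Uu ^ 2 - a ^ 2)) * D') / Du ^ 2 with hg'def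
  have hgd : HasDerivAt (fun v => 4 * (m ^ 2 * (U v) ^ 2 - a ^ 2)
      / ((1 + Real.sqrt (Δ v)) ^ 2 - 4 * τ ^ 2 * m ^ 2 * (U v) ^ 2)) g' u := by
    exact (hW.const_mul 4).div hDd (ne_of_gt hDu)
  set gu := 4 * (m ^ 2 * Uu ^ 2 - a ^ 2) / Du with hgudef
  have hgu : gu > 0 := by positivity
  have hξd : HasDerivAt ξ₁ (1 / (2 * Real.sqrt gu) * g') u := by
    exact (Real.hasDerivAt_sqrt (ne_of_gt hgu)).comp u hgd
  have hξu : ξ₁ u = Real.sqrt gu := rfl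
  have hξsq : (ξ₁ u) ^ 2 = gu := Real.sq_sqrt hgu.le
  have hBu : B u = 1 + κ / 4 * gu := by simp [B, hξsq]
  have hsqgu : Real.sqrt gu > 0 := Real.sqrt_pos.mpr hgu
  rw [hBu, hξd.deriv, hξu]
  have hred : s * Real.sqrt gu * (1 / (2 * Real.sqrt gu) * g') = s * g' / 2 := by
    field_simp
  rw [hred]
  rw [hg'def, hgudef, hD'def, hs'def]
  have hΔeq : Δ u = (1 - 2 * a * τ) ^ 2 + (m ^ 2 * Uu ^ 2 - a ^ 2) * (4 * τ ^ 2 - κ) := rfl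
  have hs2' : s ^ 2 = (1 - 2 * a * τ) ^ 2 + (m ^ 2 * Uu ^ 2 - a ^ 2) * (4 * τ ^ 2 - κ) :=
    hs2.trans hΔeq
  field_simp
  rw [hDudef]
  linear_combination
    (Uu * U' * ((s ^ 2 - ((1 - 2 * a * τ) ^ 2 + (m ^ 2 * Uu ^ 2 - a ^ 2) * (4 * τ ^ 2 - κ)))
      - 8 * a * τ)) * hs2'
end

section
/- The mean curvature of a helicoidal surface in the BCV space, computed via the reduction theorem, satisfies H = σ' + (1/ξ₁ − (κ/4)ξ₁)·sin σ, where σ is the angle the arc-length-parametrized profile curve makes with the ∂/∂ξ₁ direction; in particular the normal derivative term is D_n ln ω = (4ξ₁[8aτ − 4 + ξ₁²(κ + 2aκτ − 8τ²)] sin σ)/(16ξ₁² + [a(4+κξ₁²) − 4τξ₁²]²). -/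
/-- via the reduction theorem, the mean curvature of a helicoidal
surface in the BCV space satisfies `H = σ' + (1/ξ₁ − (κ/4)ξ₁)·sin σ`. Here
`ω = √(ξ₁² + (aB − τξ₁²)²)/B` (with `B = 1 + (κ/4)ξ₁²`) is the volume function of
the principal orbit, the unit normal of the profile curve is
`n = (−B sin σ, √(ξ₁²+(aB−τξ₁²)²) cos σ/ξ₁)`, so that
`D_n ln ω = −B sin σ · (ln ω)'(ξ₁)`, `k_g` is the geodesic curvature of the profile
curve given by `k_g = B[ξ₁²+(aB−τξ₁²)²](g̃₂₂)_{ξ₁} sin σ/(2ξ₁²) + σ'` with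
`g̃₂₂ = ξ₁²/(ξ₁²+(aB−τξ₁²)²)`, and `H = k_g − D_n ln ω`. In particular
`D_n ln ω = 4ξ₁[8aτ − 4 + ξ₁²(κ + 2aκτ − 8τ²)] sin σ /(16ξ₁² + [a(4+κξ₁²) − 4τξ₁²]²)`. -/
theorem helicoidal_mean_curvature (κ τ a : ℝ) (ξ₁ σ σ' : ℝ) (hξ : ξ₁ > 0)
    (hB : 1 + κ / 4 * ξ₁ ^ 2 > 0) :
    let B : ℝ → ℝ := fun s => 1 + κ / 4 * s ^ 2
    let Q : ℝ → ℝ := fun s => s ^ 2 + (a * B s - τ * s ^ 2) ^ 2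
    let ω : ℝ → ℝ := fun s => Real.sqrt (Q s) / B s
    let g22 : ℝ → ℝ := fun s => s ^ 2 / Q s
    let Dnlnω := (-(B ξ₁) * Real.sin σ) * deriv (fun s => Real.log (ω s)) ξ₁
    let kg := B ξ₁ * Q ξ₁ * deriv g22 ξ₁ / (2 * ξ₁ ^ 2) * Real.sin σ + σ'
    Dnlnω = 4 * ξ₁ * (8 * a * τ - 4
          + ξ₁ ^ 2 * (κ + 2 * a * κ * τ - 8 * τ ^ 2)) * Real.sin σ
        / (16 * ξ₁ ^ 2 + (a * (4 + κ * ξ₁ ^ 2) - 4 * τ * ξ₁ ^ 2) ^ 2)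
    ∧ kg - Dnlnω = σ' + (1 / ξ₁ - κ / 4 * ξ₁) * Real.sin σ := by
  intro B Q ω g22 Dnlnω kg
  have hξ0 : ξ₁ ≠ 0 := ne_of_gt hξ
  have hBpos : B ξ₁ > 0 := hB
  have hQpos : Q ξ₁ > 0 := by
    have h1 : ξ₁ ^ 2 > 0 := by positivity
    have h2 : (a * B ξ₁ - τ * ξ₁ ^ 2) ^ 2 ≥ 0 := sq_nonneg _
    show ξ₁ ^ 2 + (a * B ξ₁ - τ * ξ₁ ^ 2) ^ 2 > 0
    linarith
  set B' : ℝ := κ / 2 * ξ₁ with hB'def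
  set Q' : ℝ := 2 * ξ₁ + 2 * (a * B ξ₁ - τ * ξ₁ ^ 2) * (a * B' - 2 * τ * ξ₁) with hQ'def
  have hBd : HasDerivAt B B' ξ₁ := by
    have h := ((hasDerivAt_pow 2 ξ₁).const_mul (κ / 4)).const_add 1
    convert h using 1
    · rfl
    · rfl
    rw [hB'def]; push_cast; ring
  have hinner : HasDerivAt (fun s => a * B s - τ * s ^ 2) (a * B' - 2 * τ * ξ₁) ξ₁ := by
    have h := (hBd.const_mul a).sub ((hasDerivAt_pow 2 ξ₁).const_mul τ)
    convert h using 1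
    · rfl
    · rfl
    · rfl
    push_cast; ring
  have hQd : HasDerivAt Q Q' ξ₁ := by
    have h := (hasDerivAt_pow 2 ξ₁).add (hinner.pow 2)
    convert h using 1
    · rfl
    · rfl
    · rfl
    rw [hQ'def]; push_cast; ring
  have hQc : ∀ᶠ s in nhds ξ₁, 0 < Q s :=
    hQd.continuousAt.eventually (eventually_gt_nhds hQpos)
  have hBc : ∀ᶠ s in nhds ξ₁, 0 < B s :=
    hBd.continuousAt.eventually (eventually_gt_nhds hBpos)
  have heq : (fun s => Real.log (ω s)) =ᶠ[nhds ξ₁]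
      (fun s => 1 / 2 * Real.log (Q s) - Real.log (B s)) := by
    filter_upwards [hQc, hBc] with s hQs hBs
    have hs : Real.sqrt (Q s) ≠ 0 := by positivity
    rw [show ω s = Real.sqrt (Q s) / B s from rfl, Real.log_div hs (ne_of_gt hBs),
      Real.log_sqrt hQs.le]
    ring
  have hlogd : HasDerivAt (fun s => 1 / 2 * Real.log (Q s) - Real.log (B s))
      (1 / 2 * (Q' / Q ξ₁) - B' / B ξ₁) ξ₁ :=
    ((hQd.log (ne_of_gt hQpos)).const_mul (1 / 2)).sub (hBd.log (ne_of_gt hBpos))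
  have hderivlog : deriv (fun s => Real.log (ω s)) ξ₁
      = 1 / 2 * (Q' / Q ξ₁) - B' / B ξ₁ := by
    rw [heq.deriv_eq, hlogd.deriv]
  have hg22d : HasDerivAt g22 ((2 * ξ₁ * Q ξ₁ - ξ₁ ^ 2 * Q') / (Q ξ₁) ^ 2) ξ₁ := by
    have h := (hasDerivAt_pow 2 ξ₁).div hQd (ne_of_gt hQpos)
    convert h using 1
    · rfl
    · rfl
    · rfl
    push_cast; ring
  have hderivg22 : deriv g22 ξ₁ = (2 * ξ₁ * Q ξ₁ - ξ₁ ^ 2 * Q') / (Q ξ₁) ^ 2 :=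
    hg22d.deriv
  have hQval : Q ξ₁ = ξ₁ ^ 2 + (a * (1 + κ / 4 * ξ₁ ^ 2) - τ * ξ₁ ^ 2) ^ 2 := rfl
  have hBval : B ξ₁ = 1 + κ / 4 * ξ₁ ^ 2 := rfl
  have hden : 16 * ξ₁ ^ 2 + (a * (4 + κ * ξ₁ ^ 2) - 4 * τ * ξ₁ ^ 2) ^ 2 = 16 * Q ξ₁ := by
    rw [hQval]; ring
  have hQ0 : Q ξ₁ ≠ 0 := ne_of_gt hQpos
  have hB0 : B ξ₁ ≠ 0 := ne_of_gt hBpos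
  have key1 : (-(B ξ₁) * Real.sin σ) * (1 / 2 * (Q' / Q ξ₁) - B' / B ξ₁)
      = (2 * B' * Q ξ₁ - B ξ₁ * Q') * Real.sin σ / (2 * Q ξ₁) := by
    field_simp
    ring
  have hmain : (2 * B' * Q ξ₁ - B ξ₁ * Q') * Real.sin σ / (2 * Q ξ₁)
      = 4 * ξ₁ * (8 * a * τ - 4
          + ξ₁ ^ 2 * (κ + 2 * a * κ * τ - 8 * τ ^ 2)) * Real.sin σ / (16 * Q ξ₁) := by
    rw [div_eq_div_iff (by positivity) (by positivity)]
    rw [hQ'def, hB'def, hBval, hQval]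
    ring
  constructor
  · show (-(B ξ₁) * Real.sin σ) * deriv (fun s => Real.log (ω s)) ξ₁ = _
    rw [hderivlog, hden, key1, hmain]
  · show B ξ₁ * Q ξ₁ * deriv g22 ξ₁ / (2 * ξ₁ ^ 2) * Real.sin σ + σ'
      - (-(B ξ₁) * Real.sin σ) * deriv (fun s => Real.log (ω s)) ξ₁ = _
    rw [hderivlog, hderivg22, key1]
    have : B ξ₁ * Q ξ₁ * ((2 * ξ₁ * Q ξ₁ - ξ₁ ^ 2 * Q') / (Q ξ₁) ^ 2) / (2 * ξ₁ ^ 2)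
        - (2 * B' * Q ξ₁ - B ξ₁ * Q') / (2 * Q ξ₁) = 1 / ξ₁ - κ / 4 * ξ₁ := by
      rw [hBval, hB'def]
      field_simp
      ring
    calc B ξ₁ * Q ξ₁ * ((2 * ξ₁ * Q ξ₁ - ξ₁ ^ 2 * Q') / (Q ξ₁) ^ 2) / (2 * ξ₁ ^ 2) * Real.sin σ
          + σ' - (2 * B' * Q ξ₁ - B ξ₁ * Q') * Real.sin σ / (2 * Q ξ₁)
        = σ' + (B ξ₁ * Q ξ₁ * ((2 * ξ₁ * Q ξ₁ - ξ₁ ^ 2 * Q') / (Q ξ₁) ^ 2) / (2 * ξ₁ ^ 2)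
            - (2 * B' * Q ξ₁ - B ξ₁ * Q') / (2 * Q ξ₁)) * Real.sin σ := by ring
      _ = σ' + (1 / ξ₁ - κ / 4 * ξ₁) * Real.sin σ := by rw [this]
end
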